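/- Let F be a field of characteristic zero and let σ be the shift automorphism of F(k) sending k to k+1. If f ∈ F(k) is shift-reduced (i.e., f = p/q with p, q coprime polynomials and gcd(p, σ^i(q)) = 1 for all integers i) and there exists a nonzero rational function r ∈ F(k) with f = σ(r)/r, then r ∈ F and f = 1. -/

import Mathlib

open Polynomial

private lemma coprime_no_common_root {K : Type*} [CommRing K] [Nontrivial K]
    {u v : K[X]} (h : IsCoprime u v) {x : K} (hu : u.eval x = 0) : v.eval x ≠ 0 := by
  obtain ⟨s, t, hst⟩ := h
  intro hv
  have := congrArg (Polynomial.eval x) hst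
  simp [hu, hv] at this

private lemma key_chain {K : Type*} [Field K] [CharZero K]
    (B P Q : K[X]) (hB : B ≠ 0) (γ0 : K) (h0 : B.eval γ0 = 0)
    (h1 : ∀ x : K, B.eval x = 0 → P.eval x * B.eval (x + 1) = 0)
    (h2 : ∀ x : K, B.eval (x + 1) = 0 → Q.eval x * B.eval x = 0) :
    ∃ (x : K) (i : ℤ), P.eval x = 0 ∧ Q.eval (x + i) = 0 := by
  have hinj : Function.Injective (fun n : ℤ => γ0 + (n : K)) := by
    intro m n h
    simp only [add_right_inj] at h
    exact_mod_cast h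
  have hfin : ({n : ℤ | B.eval (γ0 + n) = 0} : Set ℤ).Finite := by
    have : ({n : ℤ | B.eval (γ0 + n) = 0} : Set ℤ)
        = (fun n : ℤ => γ0 + (n : K)) ⁻¹' {x | B.IsRoot x} := rfl
    rw [this]
    exact Set.Finite.preimage hinj.injOn (Polynomial.finite_setOf_isRoot hB)
  classical
  set S := hfin.toFinset with hS
  have h0S : (0 : ℤ) ∈ S := by
    simp only [hS, Set.Finite.mem_toFinset, Set.mem_setOf_eq]
    simpa using h0
  have hne : S.Nonempty := ⟨0, h0S⟩
  set M := S.max' hne with hMdef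
  set m := S.min' hne with hmdef
  have hMS : B.eval (γ0 + (M : K)) = 0 := by
    have := S.max'_mem hne
    rw [← hMdef] at this
    simpa [hS, Set.Finite.mem_toFinset] using this
  have hmS : B.eval (γ0 + (m : K)) = 0 := by
    have := S.min'_mem hne
    rw [← hmdef] at this
    simpa [hS, Set.Finite.mem_toFinset] using this
  have hM1 : B.eval (γ0 + (M : K) + 1) ≠ 0 := by
    intro h
    have hmem : (M + 1 : ℤ) ∈ S := by
      simp only [hS, Set.Finite.mem_toFinset, Set.mem_setOf_eq]
      push_cast
      convert h using 2
      ring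
    have := S.le_max' _ hmem
    omega
  have hm1 : B.eval (γ0 + (m : K) - 1) ≠ 0 := by
    intro h
    have hmem : (m - 1 : ℤ) ∈ S := by
      simp only [hS, Set.Finite.mem_toFinset, Set.mem_setOf_eq]
      push_cast
      convert h using 2
      ring
    have := S.min'_le _ hmem
    omega
  have hP : P.eval (γ0 + (M : K)) = 0 := by
    have := h1 _ hMS
    rcases mul_eq_zero.mp this with h | h
    · exact h
    · exact absurd h hM1
  have hQ : Q.eval (γ0 + (m : K) - 1) = 0 := by
    have hx : B.eval ((γ0 + (m : K) - 1) + 1) = 0 := by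
      convert hmS using 2; ring
    have := h2 _ hx
    rcases mul_eq_zero.mp this with h | h
    · exact h
    · exact absurd h hm1
  refine ⟨γ0 + (M : K), m - 1 - M, hP, ?_⟩
  convert hQ using 2
  push_cast
  ring

private lemma tau_zpow_eval {F K : Type*} [Field F] [Field K] (φ : F →+* K)
    (τ : Polynomial F ≃ₐ[F] Polynomial F) (hτ : τ X = X + 1) :
    ∀ (i : ℤ) (u : Polynomial F) (x : K),
      (((τ ^ i) u).map φ).eval x = (u.map φ).eval (x + (i : K)) := by
  have htu : ∀ u : Polynomial F, τ u = u.comp (X + 1) := by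
    intro u
    have h : (τ : Polynomial F →ₐ[F] Polynomial F) = Polynomial.aeval (X + 1 : Polynomial F) :=
      Polynomial.algHom_ext (by simp [hτ])
    have h2 := congrArg (fun g : Polynomial F →ₐ[F] Polynomial F => g u) h
    replace h2 : τ u = Polynomial.aeval (X + 1 : Polynomial F) u := h2
    rw [h2, Polynomial.aeval_def, Polynomial.comp, Polynomial.algebraMap_eq]
  have htsu : ∀ u : Polynomial F, τ.symm u = u.comp (X - 1) := by
    intro u
    have hX : τ (X - 1) = X := by
      rw [map_sub, hτ, map_one]; ring
    have hsX : τ.symm X = X - 1 := by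
      have h3 := congrArg τ.symm hX
      rw [AlgEquiv.symm_apply_apply] at h3
      exact h3.symm
    have h : (τ.symm : Polynomial F →ₐ[F] Polynomial F) = Polynomial.aeval (X - 1 : Polynomial F) :=
      Polynomial.algHom_ext (by simp [hsX])
    have h2 := congrArg (fun g : Polynomial F →ₐ[F] Polynomial F => g u) h
    replace h2 : τ.symm u = Polynomial.aeval (X - 1 : Polynomial F) u := h2
    rw [h2, Polynomial.aeval_def, Polynomial.comp, Polynomial.algebraMap_eq]
  have e1 : ∀ (u : Polynomial F) (x : K), ((τ u).map φ).eval x = (u.map φ).eval (x + 1) := by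
    intro u x
    rw [htu, Polynomial.map_comp, Polynomial.eval_comp]
    simp
  have e2 : ∀ (u : Polynomial F) (x : K), ((τ.symm u).map φ).eval x = (u.map φ).eval (x - 1) := by
    intro u x
    rw [htsu, Polynomial.map_comp, Polynomial.eval_comp]
    simp
  have en : ∀ (n : ℕ) (u : Polynomial F) (x : K),
      (((τ ^ n) u).map φ).eval x = (u.map φ).eval (x + (n : K)) := by
    intro n
    induction n with
    | zero => intro u x; simp
    | succ n ih =>
      intro u x
      have hp : (τ ^ (n + 1)) u = (τ ^ n) (τ u) := by
        rw [pow_succ]; rfl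
      rw [hp, ih (τ u) x, e1 u (x + (n : K))]
      push_cast
      ring_nf
  have esn : ∀ (n : ℕ) (u : Polynomial F) (x : K),
      (((τ.symm ^ n) u).map φ).eval x = (u.map φ).eval (x - (n : K)) := by
    intro n
    induction n with
    | zero => intro u x; simp
    | succ n ih =>
      intro u x
      have hp : (τ.symm ^ (n + 1)) u = (τ.symm ^ n) (τ.symm u) := by
        rw [pow_succ]; rfl
      rw [hp, ih (τ.symm u) x, e2 u (x - (n : K))]
      push_cast
      ring_nf
  intro i u x
  cases i with
  | ofNat n =>
    have : (τ ^ (Int.ofNat n : ℤ)) = τ ^ n := by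
      rw [Int.ofNat_eq_coe, zpow_natCast]
    rw [this, en n u x]
    norm_num
  | negSucc n =>
    have h1 : (τ ^ (Int.negSucc n)) = τ.symm ^ (n + 1) := by
      rw [zpow_negSucc, ← inv_pow]
      rfl
    rw [h1, esn (n + 1) u x]
    rw [Int.cast_negSucc]
    push_cast
    ring_nf

/-- **Lemma (shift-reduced, multiplicative telescoper is trivial).**
If `f = p/q ∈ F(k)` is shift-reduced and `f = σ(r)/r` for some nonzero
rational function `r`, then `r` is a constant and `f = 1`. -/
theorem shift_reduced_sigma_quotient_eq_one
    (F : Type*) [Field F] [CharZero F]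
    (τ : Polynomial F ≃ₐ[F] Polynomial F) (hτ : τ X = X + 1)
    (σ : RatFunc F ≃ₐ[F] RatFunc F)
    (hcompat : ∀ p : Polynomial F,
      σ (algebraMap (Polynomial F) (RatFunc F) p) =
        algebraMap (Polynomial F) (RatFunc F) (τ p))
    (p q : Polynomial F) (hq : q ≠ 0) (hpq : IsCoprime p q)
    (f : RatFunc F)
    (hf : f = algebraMap (Polynomial F) (RatFunc F) p /
              algebraMap (Polynomial F) (RatFunc F) q)
    (hsr : ∀ i : ℤ, IsCoprime p ((τ ^ i) q))
    (r : RatFunc F) (hr : r ≠ 0) (heq : f = σ r / r) :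
    (∃ c : F, r = RatFunc.C c) ∧ f = 1 := by
  classical
  set K := AlgebraicClosure F with hK
  set φ : F →+* K := algebraMap F K with hφ
  set a := r.num with ha
  set b := r.denom with hb
  have hb0 : b ≠ 0 := r.denom_ne_zero
  have ha0 : a ≠ 0 := RatFunc.num_ne_zero hr
  have hab : IsCoprime a b := RatFunc.isCoprime_num_denom r
  have hinj : Function.Injective (algebraMap (Polynomial F) (RatFunc F)) :=
    IsFractionRing.injective _ _
  have hτa0 : τ a ≠ 0 := fun h => ha0 (by simpa using congrArg τ.symm h)
  have hτb0 : τ b ≠ 0 := fun h => hb0 (by simpa using congrArg τ.symm h)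
  -- n.b. images nonzero
  have hQ0 : algebraMap (Polynomial F) (RatFunc F) q ≠ 0 := fun h => hq (hinj (by simpa using h))
  have hA0 : algebraMap (Polynomial F) (RatFunc F) a ≠ 0 := fun h => ha0 (hinj (by simpa using h))
  have hB0 : algebraMap (Polynomial F) (RatFunc F) b ≠ 0 := fun h => hb0 (hinj (by simpa using h))
  have hA'0 : algebraMap (Polynomial F) (RatFunc F) (τ a) ≠ 0 :=
    fun h => hτa0 (hinj (by simpa using h))
  have hB'0 : algebraMap (Polynomial F) (RatFunc F) (τ b) ≠ 0 :=
    fun h => hτb0 (hinj (by simpa using h))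
  have hσr : σ r = algebraMap (Polynomial F) (RatFunc F) (τ a) /
      algebraMap (Polynomial F) (RatFunc F) (τ b) := by
    conv_lhs => rw [← RatFunc.num_div_denom r]
    rw [map_div₀, hcompat, hcompat]
  have e0 : algebraMap (Polynomial F) (RatFunc F) p / algebraMap (Polynomial F) (RatFunc F) q =
      (algebraMap (Polynomial F) (RatFunc F) (τ a) / algebraMap (Polynomial F) (RatFunc F) (τ b)) /
      (algebraMap (Polynomial F) (RatFunc F) a / algebraMap (Polynomial F) (RatFunc F) b) := by
    rw [← hf, heq, hσr]
    congr 1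
    exact (RatFunc.num_div_denom r).symm
  have hiden : p * a * τ b = q * b * τ a := by
    apply hinj
    field_simp at e0
    push_cast [map_mul]
    linear_combination e0
  -- map to algebraic closure and evaluate
  set P := p.map φ with hP
  set Q := q.map φ with hQd
  set A := a.map φ with hA
  set B := b.map φ with hBd
  have hABK : IsCoprime A B := hab.map (Polynomial.mapRingHom φ)
  have E := tau_zpow_eval φ τ hτ
  have hshift : ∀ (u : Polynomial F) (x : K), ((τ u).map φ).eval x = (u.map φ).eval (x + 1) := by
    intro u x
    have := E 1 u x
    simpa using this
  have Hpt : ∀ x : K, P.eval x * A.eval x * B.eval (x + 1)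
      = Q.eval x * B.eval x * A.eval (x + 1) := by
    intro x
    have h := congrArg (fun u : Polynomial F => (u.map φ).eval x) hiden
    simp only [Polynomial.map_mul, Polynomial.eval_mul] at h
    rw [hshift b x, hshift a x] at h
    exact h
  have contra : ∀ (x : K) (i : ℤ), P.eval x = 0 → Q.eval (x + (i : K)) = 0 → False := by
    intro x i hPx hQx
    have hcop : IsCoprime P (((τ ^ i) q).map φ) := (hsr i).map (Polynomial.mapRingHom φ)
    have hroot : (((τ ^ i) q).map φ).eval x = 0 := by
      rw [E i q x]; exact hQx
    exact coprime_no_common_root hcop hPx hroot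
  have hB0K : B ≠ 0 := Polynomial.map_ne_zero hb0
  have hA0K : A ≠ 0 := Polynomial.map_ne_zero ha0
  -- b is constant
  have hbdeg : b.natDegree = 0 := by
    by_contra hbc
    have hdeg : B.degree ≠ 0 := by
      rw [hBd, Polynomial.degree_map]
      intro h
      exact hbc (Polynomial.natDegree_eq_zero_iff_degree_le_zero.mpr (le_of_eq h))
    obtain ⟨γ0, hγ0⟩ := IsAlgClosed.exists_root B hdeg
    have h1 : ∀ x : K, B.eval x = 0 → P.eval x * B.eval (x + 1) = 0 := by
      intro x hx
      have hAx : A.eval x ≠ 0 := coprime_no_common_root hABK.symm hx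
      have h := Hpt x
      rw [hx] at h
      have h' : A.eval x * (P.eval x * B.eval (x + 1)) = 0 := by linear_combination h
      exact (mul_eq_zero.mp h').resolve_left hAx
    have h2 : ∀ x : K, B.eval (x + 1) = 0 → Q.eval x * B.eval x = 0 := by
      intro x hx
      have hAx : A.eval (x + 1) ≠ 0 := coprime_no_common_root hABK.symm hx
      have h := Hpt x
      rw [hx] at h
      have h' : A.eval (x + 1) * (Q.eval x * B.eval x) = 0 := by linear_combination -h
      exact (mul_eq_zero.mp h').resolve_left hAx
    obtain ⟨x, i, hPx, hQx⟩ := key_chain B P Q hB0K γ0 hγ0 h1 h2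
    exact contra x i hPx hQx
  -- a is constant
  have hadeg : a.natDegree = 0 := by
    by_contra hac
    have hdeg : A.degree ≠ 0 := by
      rw [hA, Polynomial.degree_map]
      intro h
      exact hac (Polynomial.natDegree_eq_zero_iff_degree_le_zero.mpr (le_of_eq h))
    obtain ⟨γ0, hγ0⟩ := IsAlgClosed.exists_root A hdeg
    have h1 : ∀ x : K, A.eval x = 0 → Q.eval x * A.eval (x + 1) = 0 := by
      intro x hx
      have hBx : B.eval x ≠ 0 := coprime_no_common_root hABK hx
      have h := Hpt x
      rw [hx] at h
      have h' : B.eval x * (Q.eval x * A.eval (x + 1)) = 0 := by linear_combination -h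
      exact (mul_eq_zero.mp h').resolve_left hBx
    have h2 : ∀ x : K, A.eval (x + 1) = 0 → P.eval x * A.eval x = 0 := by
      intro x hx
      have hBx : B.eval (x + 1) ≠ 0 := coprime_no_common_root hABK hx
      have h := Hpt x
      rw [hx] at h
      have h' : B.eval (x + 1) * (P.eval x * A.eval x) = 0 := by linear_combination h
      exact (mul_eq_zero.mp h').resolve_left hBx
    obtain ⟨x, i, hQx, hPx⟩ := key_chain A Q P hA0K γ0 hγ0 h1 h2
    apply contra (x + (i : K)) (-i) hPx
    have : (x + (i : K)) + ((-i : ℤ) : K) = x := by push_cast; ring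
    rw [this]
    exact hQx
  -- conclude
  have hca : a = Polynomial.C (a.coeff 0) := Polynomial.eq_C_of_natDegree_eq_zero hadeg
  have hcb : b = Polynomial.C (b.coeff 0) := Polynomial.eq_C_of_natDegree_eq_zero hbdeg
  set c := a.coeff 0 / b.coeff 0 with hc
  have hrc : r = RatFunc.C c := by
    conv_lhs => rw [← RatFunc.num_div_denom r, ← ha, ← hb]
    rw [hc]
    conv_lhs => rw [hca, hcb]
    rw [RatFunc.algebraMap_C, RatFunc.algebraMap_C, map_div₀]
  refine ⟨⟨c, hrc⟩, ?_⟩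
  have hc0 : RatFunc.C c ≠ 0 := hrc ▸ hr
  have hσc : σ (RatFunc.C c) = RatFunc.C c := by
    rw [← RatFunc.algebraMap_C, hcompat]
    have hτc : τ (Polynomial.C c) = Polynomial.C c := by
      have := τ.commutes c
      rwa [Polynomial.algebraMap_eq] at this
    rw [hτc]
  rw [heq, hrc, hσc, div_self hc0]
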